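/- Let p be an odd prime, r = p^m with m ≥ 1, and q = r². Then every even integer n with 4 ≤ n ≤ r + 1 belongs to Σ(eg, q); that is, there exists a subset S of F_q with |S| = n − 1 such that η_q(−Δ_S(a)) = 1 for all a ∈ S. -/

import Mathlib

open Finset

/-- Δ_S(a) = ∏_{b ∈ S, b ≠ a} (a − b). -/
def deltaS {F : Type*} [Field F] [DecidableEq F] (S : Finset F) (a : F) : F :=
  ∏ b ∈ S.erase a, (a - b)

/-- n ∈ Σ(eg,q): n is even, n ≥ 2, and there is S ⊆ F_q with |S| = n − 1 such that
η_q(−Δ_S(a)) = 1, i.e. −Δ_S(a) is a square, for all a ∈ S. -/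
def SigmaEG (F : Type*) [Field F] [DecidableEq F] (n : ℕ) : Prop :=
  Even n ∧ 2 ≤ n ∧ ∃ S : Finset F, S.card = n - 1 ∧
    ∀ a ∈ S, IsSquare (-(deltaS S a))

theorem stmt_3 (p m : ℕ) (hp : p.Prime) (hodd : p ≠ 2) (hm : 0 < m)
    (r : ℕ) (hr : r = p ^ m)
    (F : Type*) [Field F] [Fintype F] [DecidableEq F] (hF : Fintype.card F = r ^ 2)
    (n : ℕ) (hne : Even n) (hn4 : 4 ≤ n) (hnr : n ≤ r + 1) :
    SigmaEG F n := by
  classical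
  have hpodd : Odd p := hp.odd_of_ne_two hodd
  have hp3 : 3 ≤ p := by
    have := hp.two_le
    rcases hpodd with ⟨t, ht⟩; omega
  have hr3 : 3 ≤ r := by
    calc 3 ≤ p := hp3
    _ ≤ p ^ m := Nat.le_self_pow hm.ne' p
    _ = r := hr.symm
  have hrodd : Odd r := hr ▸ hpodd.pow
  -- characteristic of F is p
  have hchar' : CharP F (ringChar F) := ringChar.charP F
  have hrcp : ringChar F = p := by
    have hprime : (ringChar F).Prime := CharP.char_is_prime F (ringChar F)
    obtain ⟨k, hk', hcard⟩ := FiniteField.card F (ringChar F)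
    have hdvd : p ∣ ringChar F ^ (k : ℕ) := by
      rw [← hcard, hF, hr]
      exact dvd_pow (dvd_pow_self p hm.ne') (by positivity)
    have := Nat.Prime.dvd_of_dvd_pow hp hdvd
    exact ((Nat.prime_dvd_prime_iff_eq hp hprime).mp this).symm
  have hcharp : CharP F p := hrcp ▸ hchar'
  -- Frobenius: x ↦ x ^ r
  have frob : ∀ a b : F, (a - b) ^ r = a ^ r - b ^ r := by
    have : Fact p.Prime := ⟨hp⟩
    intro a b
    rw [hr]
    exact sub_pow_char_pow a b m
  -- a primitive (r-1)-th root of unity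
  have hcardU : Fintype.card Fˣ = r ^ 2 - 1 := by
    rw [Fintype.card_units, hF]
  have hfact : r ^ 2 - 1 = (r - 1) * (r + 1) := by
    obtain ⟨s, rfl⟩ : ∃ s, r = s + 1 := ⟨r - 1, by omega⟩
    simp only [Nat.add_sub_cancel]
    have h1 : (s + 1) ^ 2 = s * (s + 1 + 1) + 1 := by ring
    omega
  have hdvdU : r - 1 ∣ Fintype.card Fˣ := by
    rw [hcardU, hfact]
    exact Dvd.intro _ rfl
  obtain ⟨ζ, hζord⟩ : ∃ ζ : Fˣ, orderOf ζ = r - 1 := by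
    have hcnt := IsCyclic.card_orderOf_eq_totient (α := Fˣ) hdvdU
    have htot : 0 < Nat.totient (r - 1) := Nat.totient_pos.mpr (by omega)
    rw [← hcnt] at htot
    obtain ⟨a, ha⟩ := Finset.card_pos.mp htot
    exact ⟨a, (Finset.mem_filter.mp ha).2⟩
  have hζ : IsPrimitiveRoot (ζ : F) (r - 1) :=
    IsPrimitiveRoot.coe_units_iff.mpr (hζord ▸ IsPrimitiveRoot.orderOf ζ)
  -- the set of Frobenius-fixed points containing 0
  set T : Finset F := insert 0 (Polynomial.nthRootsFinset (r - 1) (1 : F)) with hT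
  have h0notin : (0 : F) ∉ Polynomial.nthRootsFinset (r - 1) (1 : F) := by
    intro h
    have := (Polynomial.mem_nthRootsFinset (by omega : 0 < r - 1) (1 : F)).mp h
    rw [zero_pow (show r - 1 ≠ 0 by omega)] at this
    exact zero_ne_one this
  have hTcard : T.card = r := by
    rw [hT, Finset.card_insert_of_notMem h0notin, hζ.card_nthRootsFinset]
    omega
  have hTfix : ∀ x ∈ T, x ^ r = x := by
    intro x hx
    rcases Finset.mem_insert.mp hx with h | h
    · subst h; exact zero_pow (by omega)
    · have hx1 : x ^ (r - 1) = 1 := (Polynomial.mem_nthRootsFinset (by omega : 0 < r - 1) (1 : F)).mp h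
      calc x ^ r = x ^ (r - 1) * x := by rw [← pow_succ]; congr 1; omega
      _ = x := by rw [hx1, one_mul]
  obtain ⟨S, hST, hScard⟩ := Finset.exists_subset_card_eq (s := T) (n := n - 1)
    (by rw [hTcard]; omega)
  refine ⟨hne, by omega, S, hScard, fun a ha => ?_⟩
  set D := deltaS S a with hD
  have hD0 : D ≠ 0 := by
    rw [hD, deltaS]
    apply Finset.prod_ne_zero_iff.mpr
    intro b hb
    exact sub_ne_zero.mpr (Finset.ne_of_mem_erase hb).symm
  have hDfix : D ^ r = D := by
    rw [hD, deltaS, ← Finset.prod_pow]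
    apply Finset.prod_congr rfl
    intro b hb
    rw [frob, hTfix a (hST ha), hTfix b (hST (Finset.mem_of_mem_erase hb))]
  have hnegfix : (-D) ^ r = -D := by
    have := frob 0 D
    rw [zero_sub, zero_pow (show r ≠ 0 by omega), zero_sub, hDfix] at this
    exact this
  have hnegne : -D ≠ 0 := neg_ne_zero.mpr hD0
  have hpow1 : (-D) ^ (r - 1) = 1 := by
    apply mul_right_cancel₀ hnegne
    rw [one_mul, ← pow_succ]
    have : r - 1 + 1 = r := by omega
    rw [this, hnegfix]
  obtain ⟨k0, hk0⟩ := hrodd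
  have hq2 : Fintype.card F / 2 = (r - 1) * (k0 + 1) := by
    have hcardeq : r ^ 2 = 2 * ((r - 1) * (k0 + 1)) + 1 := by
      subst hk0
      simp only [Nat.add_sub_cancel]
      ring
    rw [hF]; omega
  have hsq1 : (-D) ^ (Fintype.card F / 2) = 1 := by
    rw [hq2, pow_mul, hpow1, one_pow]
  exact (FiniteField.isSquare_iff (by rw [hrcp]; exact hodd) hnegne).mpr hsq1
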